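/- An associative ring R is locally unital in the two-sided sense if and only if it is both left and right locally unital. Precisely: if for every finite list of elements of R there is an idempotent acting as a left identity on them, and likewise an idempotent acting as a right identity on them, then for every finite list r₁,…,rₙ ∈ R there is a single idempotent e ∈ R with e·rᵢ = rᵢ·e = rᵢ for all i. -/

import Mathlib

/-- A non-unital ring is locally unital (two-sided sense) iff it is both left and
right locally unital. -/
theorem stmt11 {R : Type*} [NonUnitalRing R] :
    ((∀ L : List R, ∃ e : R, e * e = e ∧ ∀ r ∈ L, e * r = r) ∧
      (∀ L : List R, ∃ e : R, e * e = e ∧ ∀ r ∈ L, r * e = r)) ↔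
      (∀ L : List R, ∃ e : R, e * e = e ∧ ∀ r ∈ L, e * r = r ∧ r * e = r) := by
  constructor
  · rintro ⟨h1, h2⟩ L
    obtain ⟨u, hu, huL⟩ := h1 L
    obtain ⟨v, hv, hvL⟩ := h2 (u :: L)
    have huv : u * v = u := hvL u List.mem_cons_self
    refine ⟨u + v - v * u, ?_, fun r hr => ⟨?_, ?_⟩⟩
    · have : (u + v - v * u) * (u + v - v * u)
        = u*u + u*v - u*(v*u) + (v*u + v*v - v*(v*u)) - ((v*u)*u + (v*u)*v - (v*u)*(v*u)) := by
        noncomm_ring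
      rw [this]
      simp only [← mul_assoc, hu, hv, huv]
      rw [mul_assoc v u v, huv, mul_assoc v u u, hu]
      abel
    · have h := huL r hr
      have : (u + v - v * u) * r = u*r + v*r - v*(u*r) := by noncomm_ring
      rw [this, h]; noncomm_ring
    · have h := hvL r (List.mem_cons_of_mem _ hr)
      have : r * (u + v - v * u) = r*u + r*v - (r*v)*u := by noncomm_ring
      rw [this, h]; noncomm_ring
  · intro h
    exact ⟨fun L => (h L).imp fun e ⟨he, hL⟩ => ⟨he, fun r hr => (hL r hr).1⟩,
      fun L => (h L).imp fun e ⟨he, hL⟩ => ⟨he, fun r hr => (hL r hr).2⟩⟩
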